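/- Let M > 0 and define H_M to be the set of functions p : ℂ → ℂ analytic on the open strip S_M = {z ∈ ℂ : |Im z| < M} with ‖p‖_{H_M} = sup_{|y| < M} (∫_ℝ (1+|x|²)|p(x+iy)|² dx)^{1/2} < ∞. If (f_n) is a sequence in H_M that is Cauchy with respect to ‖·‖_{H_M} (i.e. for every ε > 0 there exists N such that ‖f_n − f_m‖_{H_M} ≤ ε for all n, m ≥ N), then there exists f ∈ H_M, analytic on S_M with ‖f‖_{H_M} < ∞, such that ‖f_n − f‖_{H_M} → 0 as n → ∞. -/

import Mathlib

open MeasureTheory Complex Set Metric Real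

/-- The `H_M` norm: the supremum over horizontal lines `Im z = y`, `|y| < M`, of the
weighted `L²` norm `(∫ (1+|x|²)|p(x+iy)|² dx)^{1/2}`, valued in `[0,∞]`. -/
noncomputable def HMnorm (M : ℝ) (p : ℂ → ℂ) : ENNReal :=
  ⨆ (y : ℝ) (_ : |y| < M),
    (∫⁻ x : ℝ, ENNReal.ofReal
        ((1 + |x| ^ 2) * ‖p (x + y * Complex.I)‖ ^ 2)) ^ ((1 : ℝ) / 2)

/-- the line integral -/
noncomputable def Lline (M : ℝ) (p : ℂ → ℂ) (y : ℝ) : ENNReal :=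
  ∫⁻ x : ℝ, ENNReal.ofReal ((1 + |x| ^ 2) * ‖p (x + y * Complex.I)‖ ^ 2)

lemma HMnorm_eq (M : ℝ) (p : ℂ → ℂ) :
    HMnorm M p = ⨆ (y : ℝ) (_ : |y| < M), (Lline M p y) ^ ((1:ℝ)/2) := rfl

lemma Lline_le (M : ℝ) (p : ℂ → ℂ) {y : ℝ} (hy : |y| < M) :
    Lline M p y ≤ (HMnorm M p) ^ (2:ℝ) := by
  have h1 : (Lline M p y) ^ ((1:ℝ)/2) ≤ HMnorm M p := by
    rw [HMnorm_eq]; exact le_iSup₂ (f := fun (y : ℝ) (_ : |y| < M) => (Lline M p y) ^ ((1:ℝ)/2)) y hy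
  calc Lline M p y = ((Lline M p y) ^ ((1:ℝ)/2)) ^ (2:ℝ) := by
        rw [← ENNReal.rpow_mul]; norm_num
    _ ≤ (HMnorm M p) ^ (2:ℝ) := ENNReal.rpow_le_rpow h1 (by norm_num)

lemma HMnorm_le {M : ℝ} {p : ℂ → ℂ} {C : ENNReal}
    (h : ∀ y : ℝ, |y| < M → Lline M p y ≤ C ^ (2:ℝ)) : HMnorm M p ≤ C := by
  rw [HMnorm_eq]
  refine iSup₂_le fun y hy => ?_
  calc (Lline M p y) ^ ((1:ℝ)/2) ≤ (C ^ (2:ℝ)) ^ ((1:ℝ)/2) :=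
        ENNReal.rpow_le_rpow (h y hy) (by norm_num)
    _ = C := by rw [← ENNReal.rpow_mul]; norm_num


lemma circle_mean {U : Set ℂ} (hU : IsOpen U) {p : ℂ → ℂ} (hp : DifferentiableOn ℂ p U)
    {c : ℂ} {s : ℝ} (hs : 0 < s) (hball : closedBall c s ⊆ U) :
    ‖p c‖ ^ 2 ≤ (2*π)⁻¹ * ∫ θ in (-π)..π, ‖p (circleMap c s θ)‖ ^ 2 := by
  set q : ℂ → ℂ := fun z => p z ^ 2 with hq
  have hqc : ContinuousOn q (closedBall c s) := (hp.continuousOn.mono hball).pow 2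
  have hqd : ∀ x ∈ ball c s \ (∅ : Set ℂ), DifferentiableAt ℂ q x := by
    intro x hx
    have hxU : x ∈ U := hball (ball_subset_closedBall hx.1)
    exact (hp.differentiableAt (hU.mem_nhds hxU)).pow 2
  have hint := Complex.two_pi_I_inv_smul_circleIntegral_sub_inv_smul_of_differentiable_on_off_countable
    countable_empty (mem_ball_self hs) hqc hqd
  have hcirc : (∮ z in C(c, s), (z - c)⁻¹ • q z)
      = Complex.I * ∫ θ in (0:ℝ)..2*π, q (circleMap c s θ) := by
    rw [circleIntegral, ← intervalIntegral.integral_const_mul]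
    refine intervalIntegral.integral_congr fun θ _ => ?_
    have hne : circleMap 0 s θ ≠ 0 := by simpa using circleMap_ne_center (c := (0:ℂ)) hs.ne' (θ := θ)
    simp only [deriv_circleMap, circleMap_sub_center, smul_eq_mul]
    field_simp
  rw [hcirc, smul_eq_mul] at hint
  have hcont : Continuous fun θ => p (circleMap c s θ) := by
    refine hp.continuousOn.comp_continuous (continuous_circleMap c s) fun θ => ?_
    exact hball (sphere_subset_closedBall (circleMap_mem_sphere c hs.le θ))
  have hab : ‖q c‖ ≤ (2*π)⁻¹ * ∫ θ in (0:ℝ)..2*π,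
      ‖p (circleMap c s θ)‖ ^ 2 := by
    rw [← hint]
    rw [norm_mul, norm_mul]
    have h1 : ‖(2 * ↑π * Complex.I)⁻¹‖ = (2*π)⁻¹ := by
      rw [norm_inv]
      simp [_root_.abs_of_nonneg Real.pi_pos.le]
    rw [h1, Complex.norm_I, one_mul]
    gcongr
    calc ‖∫ θ in (0:ℝ)..2*π, q (circleMap c s θ)‖
        ≤ ∫ θ in (0:ℝ)..2*π, ‖q (circleMap c s θ)‖ := by
          refine (intervalIntegral.norm_integral_le_integral_norm (by positivity)).trans_eq ?_
          refine intervalIntegral.integral_congr fun θ _ => rfl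
      _ = ∫ θ in (0:ℝ)..2*π, ‖p (circleMap c s θ)‖ ^ 2 := by
          refine intervalIntegral.integral_congr fun θ _ => ?_
          simp [hq]
  have per : Function.Periodic (fun θ => ‖p (circleMap c s θ)‖ ^ 2) (2*π) :=
    fun θ => by simp [periodic_circleMap c s θ]
  have hshift : (∫ θ in (0:ℝ)..2*π, ‖p (circleMap c s θ)‖ ^ 2)
      = ∫ θ in (-π)..π, ‖p (circleMap c s θ)‖ ^ 2 := by
    have := per.intervalIntegral_add_eq (0:ℝ) (-π)
    simp only [zero_add] at this
    rw [this]
    have h2 : (-π) + 2*π = π := by ring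
    rw [h2]
  have habs : ‖p c‖ ^ 2 = ‖q c‖ := by simp [hq]
  rw [habs, ← hshift]
  exact hab




set_option maxHeartbeats 2000000 in
lemma pointwise_bound {M r ε : ℝ} (hr : 0 < r) {p : ℂ → ℂ}
    (hp : DifferentiableOn ℂ p {z : ℂ | |z.im| < M}) {z₀ : ℂ} (hz : |z₀.im| + r < M)
    (hε : 0 ≤ ε) (hHM : HMnorm M p ≤ ENNReal.ofReal ε) :
    ‖p z₀‖ ^ 2 ≤ 4 * ε^2 / (π * r) := by
  have hπ := Real.pi_pos
  set S := {z : ℂ | |z.im| < M} with hSdef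
  have hSopen : IsOpen S := isOpen_lt (continuous_abs.comp Complex.continuous_im) continuous_const
  have hsub : closedBall z₀ r ⊆ S := by
    intro z hzb
    rw [mem_closedBall, Complex.dist_eq] at hzb
    have h1 : |z.im - z₀.im| ≤ ‖z - z₀‖ := by
      simpa using Complex.abs_im_le_norm (z - z₀)
    have : |z.im| ≤ |z₀.im| + |z.im - z₀.im| := by
      calc |z.im| = |z₀.im + (z.im - z₀.im)| := by ring_nf
        _ ≤ |z₀.im| + |z.im - z₀.im| := abs_add_le _ _
    simp only [hSdef, mem_setOf_eq]
    linarith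
  set X : ℝ := ‖p z₀‖ ^ 2 with hXdef
  have hX0 : 0 ≤ X := by positivity
  set h : ℝ → ℝ → ℝ := fun s θ => ‖p (circleMap z₀ s θ)‖ ^ 2 with hhdef
  -- continuity of h s
  have hmem : ∀ s ∈ Ioo (0:ℝ) r, ∀ θ : ℝ, circleMap z₀ s θ ∈ S := fun s hs θ =>
    hsub (sphere_subset_closedBall.trans (closedBall_subset_closedBall hs.2.le)
      (circleMap_mem_sphere z₀ hs.1.le θ))
  have hconth : ∀ s ∈ Ioo (0:ℝ) r, Continuous (h s) := by
    intro s hs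
    exact ((hp.continuousOn.comp_continuous (continuous_circleMap z₀ s)
      (hmem s hs)).norm.pow 2).congr (fun θ => by simp [hhdef])
  -- Step A : circle mean inequality in ENNReal form
  have stepA : ∀ s ∈ Ioo (0:ℝ) r,
      ENNReal.ofReal X ≤ ENNReal.ofReal ((2*π)⁻¹) *
        ∫⁻ θ in Ioo (-π) π, ENNReal.ofReal (h s θ) := by
    intro s hs
    have hball : closedBall z₀ s ⊆ S :=
      (closedBall_subset_closedBall hs.2.le).trans hsub
    have hcm := circle_mean hSopen hp hs.1 hball
    have hintg : IntegrableOn (h s) (Ioc (-π) π) := by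
      exact (hconth s hs).integrableOn_Ioc
    have hoint : ENNReal.ofReal (∫ θ in (-π)..π, h s θ)
        = ∫⁻ θ in Ioo (-π) π, ENNReal.ofReal (h s θ) := by
      rw [intervalIntegral.integral_of_le (by linarith : -π ≤ π),
        ofReal_integral_eq_lintegral_ofReal hintg
          (Filter.Eventually.of_forall fun θ => by positivity),
        setLIntegral_congr (Ioo_ae_eq_Ioc (a := -π) (b := π)).symm]
    calc ENNReal.ofReal X ≤ ENNReal.ofReal ((2*π)⁻¹ * ∫ θ in (-π)..π, h s θ) :=
          ENNReal.ofReal_le_ofReal hcm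
      _ = ENNReal.ofReal ((2*π)⁻¹) * ENNReal.ofReal (∫ θ in (-π)..π, h s θ) :=
          ENNReal.ofReal_mul (by positivity)
      _ = _ := by rw [hoint]
  -- setup for change of variables
  set A : Set (ℝ × ℝ) := Ioo (0:ℝ) r ×ˢ Ioo (-π) π with hAdef
  have hAmeas : MeasurableSet A := measurableSet_Ioo.prod measurableSet_Ioo
  set G : ℝ × ℝ → ENNReal := fun v =>
    ENNReal.ofReal (‖p (v.1 + v.2 * Complex.I)‖ ^ 2) with hGdef
  set T : ℝ × ℝ → ℝ × ℝ := fun q => (z₀.re, z₀.im) + polarCoord.symm q with hTdef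
  have hTapp : ∀ q : ℝ × ℝ, T q = (z₀.re + q.1 * Real.cos q.2, z₀.im + q.1 * Real.sin q.2) := by
    intro q; simp [hTdef, polarCoord, Prod.ext_iff]
  have ceq : ∀ s θ : ℝ, ((z₀.re + s * Real.cos θ : ℝ) : ℂ)
      + ((z₀.im + s * Real.sin θ : ℝ) : ℂ) * Complex.I = circleMap z₀ s θ := by
    intro s θ
    simp only [circleMap, Complex.exp_mul_I]
    push_cast
    rw [Complex.ext_iff]
    constructor <;> simp <;> ring
  have hGT : ∀ s θ : ℝ, G (T (s, θ)) = ENNReal.ofReal (h s θ) := by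
    intro s θ
    rw [hTapp]
    simp only [hGdef, hhdef]
    rw [ceq]
  -- derivative data
  set B : ℝ × ℝ → ℝ × ℝ →L[ℝ] ℝ × ℝ := fun q =>
    LinearMap.toContinuousLinearMap (Matrix.toLin (Module.Basis.finTwoProd ℝ) (Module.Basis.finTwoProd ℝ)
      !![Real.cos q.2, -q.1 * Real.sin q.2; Real.sin q.2, q.1 * Real.cos q.2]) with hBdef
  have hTderiv : ∀ q ∈ A, HasFDerivWithinAt T (B q) A q := by
    intro q _
    exact ((hasFDerivAt_polarCoord_symm q).const_add _).hasFDerivWithinAt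
  have hBdet : ∀ q : ℝ × ℝ, (B q).det = q.1 := by
    intro q
    conv_rhs => rw [← one_mul q.1, ← Real.cos_sq_add_sin_sq q.2]
    simp only [hBdef, neg_mul, LinearMap.det_toContinuousLinearMap, LinearMap.det_toLin,
      Matrix.det_fin_two_of, sub_neg_eq_add]
    ring
  have hTinj : InjOn T A := by
    have h1 : InjOn polarCoord.symm polarCoord.target := polarCoord.symm.injOn
    have h2 : A ⊆ polarCoord.target := by
      rw [polarCoord_target]
      exact Set.prod_mono (Ioo_subset_Ioi_self) subset_rfl
    intro a ha b hb hab
    exact h1 (h2 ha) (h2 hb) (by simpa [hTdef] using hab)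
  -- change of variables
  have hCoV : ∫⁻ v in T '' A, G v = ∫⁻ q in A, ENNReal.ofReal q.1 * G (T q) := by
    rw [lintegral_image_eq_lintegral_abs_det_fderiv_mul volume hAmeas hTderiv hTinj G]
    refine setLIntegral_congr_fun hAmeas (fun q hq => ?_)
    rw [hBdet, abs_of_pos hq.1.1]
  -- continuity / measurability of G
  set W : Set (ℝ × ℝ) := {v : ℝ × ℝ | |v.2| < M} with hWdef
  have hWopen : IsOpen W := isOpen_lt (continuous_abs.comp continuous_snd) continuous_const
  have hGcont : ContinuousOn G W := by
    refine ENNReal.continuous_ofReal.comp_continuousOn ?_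
    refine ContinuousOn.pow ?_ 2
    refine continuous_norm.comp_continuousOn ?_
    refine hp.continuousOn.comp (Continuous.continuousOn
      ((Complex.continuous_ofReal.comp continuous_fst).add
        ((Complex.continuous_ofReal.comp continuous_snd).mul continuous_const))) ?_
    intro v hv
    simpa [hSdef, hWdef] using hv
  have hTcont : Continuous T := by
    have : T = fun q : ℝ × ℝ => (z₀.re + q.1 * Real.cos q.2, z₀.im + q.1 * Real.sin q.2) :=
      funext hTapp
    rw [this]
    exact (continuous_const.add (continuous_fst.mul
        (Real.continuous_cos.comp continuous_snd))).prodMk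
      (continuous_const.add (continuous_fst.mul (Real.continuous_sin.comp continuous_snd)))
  have hAW : A ⊆ T ⁻¹' W := by
    rintro ⟨s, θ⟩ ⟨hs, hθ⟩
    simp only [mem_preimage, hTapp, hWdef, mem_setOf_eq]
    have h1 := Real.neg_one_le_sin θ
    have h2 := Real.sin_le_one θ
    simp only [mem_Ioo] at hs
    rw [abs_lt]
    have := abs_nonneg z₀.im
    have := neg_abs_le z₀.im
    have := le_abs_self z₀.im
    constructor <;> nlinarith
  have hGTae : AEMeasurable (fun q => ENNReal.ofReal q.1 * G (T q)) (volume.restrict A) := by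
    have h1 : ContinuousOn (fun q => G (T q)) (T ⁻¹' W) :=
      hGcont.comp hTcont.continuousOn (fun q hq => hq)
    have h2 : AEMeasurable (fun q => G (T q)) (volume.restrict A) :=
      (h1.aemeasurable (hWopen.preimage hTcont).measurableSet).mono_measure
        (Measure.restrict_mono hAW le_rfl)
    exact (ENNReal.measurable_ofReal.comp measurable_fst).aemeasurable.mul h2
  -- iterated integral over A
  set D : ENNReal := ∫⁻ s in Ioo (0:ℝ) r, ∫⁻ θ in Ioo (-π) π,
    ENNReal.ofReal s * ENNReal.ofReal (h s θ) with hDdef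
  have hC1 : D = ∫⁻ q in A, ENNReal.ofReal q.1 * G (T q) := by
    have hmeas' : AEMeasurable (fun q : ℝ × ℝ => ENNReal.ofReal q.1 * G (T q))
        ((volume.restrict (Ioo (0:ℝ) r)).prod (volume.restrict (Ioo (-π) π))) := by
      rw [Measure.prod_restrict, ← Measure.volume_eq_prod, ← hAdef]
      exact hGTae
    calc D = ∫⁻ s in Ioo (0:ℝ) r, ∫⁻ θ in Ioo (-π) π, ENNReal.ofReal s * G (T (s, θ)) := by
          refine lintegral_congr fun s => lintegral_congr fun θ => ?_
          rw [hGT]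
      _ = ∫⁻ q, ENNReal.ofReal q.1 * G (T q)
            ∂((volume.restrict (Ioo (0:ℝ) r)).prod (volume.restrict (Ioo (-π) π))) :=
          (lintegral_prod _ hmeas').symm
      _ = ∫⁻ q in A, ENNReal.ofReal q.1 * G (T q) := by
          rw [Measure.prod_restrict, ← Measure.volume_eq_prod, ← hAdef]
  -- image inside rectangle
  set Rect : Set (ℝ × ℝ) :=
    Ioo (z₀.re - r) (z₀.re + r) ×ˢ Ioo (z₀.im - r) (z₀.im + r) with hRdef
  have hTA : T '' A ⊆ Rect := by
    rintro _ ⟨⟨s, θ⟩, ⟨hs, hθ⟩, rfl⟩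
    simp only [mem_Ioo] at hs
    have c1 := Real.neg_one_le_cos θ
    have c2 := Real.cos_le_one θ
    have s1 := Real.neg_one_le_sin θ
    have s2 := Real.sin_le_one θ
    refine ⟨?_, ?_⟩ <;> rw [hTapp] <;> simp only [mem_Ioo] <;>
      constructor <;> nlinarith
  -- rectangle bound
  have hRW : Rect ⊆ W := by
    rintro ⟨x, y⟩ ⟨_, hy⟩
    simp only [mem_Ioo] at hy
    simp only [hWdef, mem_setOf_eq, abs_lt]
    have := le_abs_self z₀.im
    have := neg_abs_le z₀.im
    constructor <;> nlinarith
  have hC3 : ∫⁻ v in Rect, G v ≤ ENNReal.ofReal (2*r) * (ENNReal.ofReal ε) ^ (2:ℝ) := by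
    have hGae2 : AEMeasurable G
        ((volume.restrict (Ioo (z₀.re - r) (z₀.re + r))).prod
          (volume.restrict (Ioo (z₀.im - r) (z₀.im + r)))) := by
      rw [Measure.prod_restrict, ← hRdef]
      exact (hGcont.aemeasurable hWopen.measurableSet).mono_measure
        (Measure.restrict_mono hRW le_rfl)
    have heq : ∫⁻ v in Rect, G v = ∫⁻ y in Ioo (z₀.im - r) (z₀.im + r),
        ∫⁻ x in Ioo (z₀.re - r) (z₀.re + r), G (x, y) := by
      calc ∫⁻ v in Rect, G v
          = ∫⁻ v, G v ∂((volume.restrict (Ioo (z₀.re - r) (z₀.re + r))).prod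
              (volume.restrict (Ioo (z₀.im - r) (z₀.im + r)))) := by
            rw [Measure.prod_restrict, ← Measure.volume_eq_prod, ← hRdef]
        _ = _ := lintegral_prod_symm _ hGae2
    rw [heq]
    have hinner : ∀ y ∈ Ioo (z₀.im - r) (z₀.im + r),
        ∫⁻ x in Ioo (z₀.re - r) (z₀.re + r), G (x, y) ≤ (ENNReal.ofReal ε) ^ (2:ℝ) := by
      intro y hy
      simp only [mem_Ioo] at hy
      have hyM : |y| < M := by
        rw [abs_lt]
        have := le_abs_self z₀.im
        have := neg_abs_le z₀.im
        constructor <;> nlinarith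
      calc ∫⁻ x in Ioo (z₀.re - r) (z₀.re + r), G (x, y)
          ≤ ∫⁻ x : ℝ, G (x, y) := setLIntegral_le_lintegral _ _
        _ ≤ Lline M p y := by
            refine lintegral_mono fun x => ?_
            simp only [hGdef]
            refine ENNReal.ofReal_le_ofReal ?_
            have h1 : (0:ℝ) ≤ ‖p (↑x + ↑y * Complex.I)‖ ^ 2 := by positivity
            nlinarith [sq_nonneg |x|]
        _ ≤ (HMnorm M p) ^ (2:ℝ) := Lline_le M p hyM
        _ ≤ (ENNReal.ofReal ε) ^ (2:ℝ) := ENNReal.rpow_le_rpow hHM (by norm_num)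
    calc ∫⁻ y in Ioo (z₀.im - r) (z₀.im + r), ∫⁻ x in Ioo (z₀.re - r) (z₀.re + r), G (x, y)
        ≤ ∫⁻ _ in Ioo (z₀.im - r) (z₀.im + r), (ENNReal.ofReal ε) ^ (2:ℝ) := by
          refine lintegral_mono_ae ?_
          filter_upwards [ae_restrict_mem measurableSet_Ioo] with y hy
          exact hinner y hy
      _ = ENNReal.ofReal (2*r) * (ENNReal.ofReal ε) ^ (2:ℝ) := by
          rw [setLIntegral_const, Real.volume_Ioo, show z₀.im + r - (z₀.im - r) = 2*r by ring,
            mul_comm]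
  -- lower bound for D
  have lowB : ENNReal.ofReal (r/2) * ENNReal.ofReal (r/2) * ENNReal.ofReal X
      ≤ ∫⁻ s in Ioo (0:ℝ) r, ENNReal.ofReal s * ENNReal.ofReal X := by
    calc ENNReal.ofReal (r/2) * ENNReal.ofReal (r/2) * ENNReal.ofReal X
        = ∫⁻ _ in Ioo (r/2) r, ENNReal.ofReal (r/2) * ENNReal.ofReal X := by
          rw [setLIntegral_const, Real.volume_Ioo, show r - r/2 = r/2 by ring]
          ring
      _ ≤ ∫⁻ s in Ioo (r/2) r, ENNReal.ofReal s * ENNReal.ofReal X := by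
          refine lintegral_mono_ae ?_
          filter_upwards [ae_restrict_mem measurableSet_Ioo] with s hs
          exact mul_le_mul_left (ENNReal.ofReal_le_ofReal hs.1.le) _
      _ ≤ _ := lintegral_mono_set (Ioo_subset_Ioo (by linarith) le_rfl)
  -- middle bound
  have midB : (∫⁻ s in Ioo (0:ℝ) r, ENNReal.ofReal s * ENNReal.ofReal X)
      ≤ ENNReal.ofReal ((2*π)⁻¹) * D := by
    rw [hDdef, ← lintegral_const_mul' _ _ (ENNReal.ofReal_ne_top)]
    refine lintegral_mono_ae ?_
    filter_upwards [ae_restrict_mem measurableSet_Ioo] with s hs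
    calc ENNReal.ofReal s * ENNReal.ofReal X
        ≤ ENNReal.ofReal s * (ENNReal.ofReal ((2*π)⁻¹) *
            ∫⁻ θ in Ioo (-π) π, ENNReal.ofReal (h s θ)) :=
          mul_le_mul_right (stepA s hs) _
      _ = ENNReal.ofReal ((2*π)⁻¹) *
            (ENNReal.ofReal s * ∫⁻ θ in Ioo (-π) π, ENNReal.ofReal (h s θ)) := by ring
      _ = ENNReal.ofReal ((2*π)⁻¹) *
            ∫⁻ θ in Ioo (-π) π, ENNReal.ofReal s * ENNReal.ofReal (h s θ) := by
          rw [lintegral_const_mul' _ _ (ENNReal.ofReal_ne_top)]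
  -- combine
  have main : ENNReal.ofReal (r/2) * ENNReal.ofReal (r/2) * ENNReal.ofReal X
      ≤ ENNReal.ofReal ((2*π)⁻¹) * (ENNReal.ofReal (2*r) * (ENNReal.ofReal ε) ^ (2:ℝ)) := by
    refine (lowB.trans midB).trans ?_
    refine mul_le_mul_right ?_ _
    rw [hC1, ← hCoV]
    exact (lintegral_mono_set hTA).trans hC3
  have hsq : (ENNReal.ofReal ε) ^ (2:ℝ) = ENNReal.ofReal (ε^2) := by
    rw [show (2:ℝ) = ((2:ℕ):ℝ) by norm_num, ENNReal.rpow_natCast, ← ENNReal.ofReal_pow hε]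
  rw [hsq, ← ENNReal.ofReal_mul (by positivity), ← ENNReal.ofReal_mul (by positivity),
    ← ENNReal.ofReal_mul (by positivity), ← ENNReal.ofReal_mul (by positivity)] at main
  have hreal : r/2 * (r/2) * X ≤ (2*π)⁻¹ * (2*r*ε^2) := by
    have := (ENNReal.ofReal_le_ofReal_iff (by positivity)).1 main
    linarith [this]
  have h2 : (2*π)⁻¹ * (2*r*ε^2) = r*ε^2/π := by field_simp
  rw [h2] at hreal
  have hm3 : r/2 * (r/2) * X * π ≤ r * ε^2 := by
    have := mul_le_mul_of_nonneg_right hreal hπ.le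
    rwa [div_mul_cancel₀ _ (ne_of_gt hπ)] at this
  rw [le_div_iff₀ (by positivity)]
  have h4 : X * (π*r) * r ≤ 4*ε^2 * r := by
    calc X * (π*r) * r = 4*(r/2 * (r/2) * X * π) := by ring
      _ ≤ 4*(r*ε^2) := by linarith
      _ = 4*ε^2 * r := by ring
  exact le_of_mul_le_mul_right h4 hr



set_option maxHeartbeats 1000000 in
/-- Completeness of the space `H_M` of functions analytic on the strip
`{|Im z| < M}` with finite weighted-`L²` norm along horizontal lines: every Cauchy
sequence converges in the `H_M` norm to an element of `H_M`. -/
theorem HM_complete (M : ℝ) (hM : 0 < M) (f : ℕ → ℂ → ℂ)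
    (hanal : ∀ n, DifferentiableOn ℂ (f n) {z : ℂ | |z.im| < M})
    (hfin : ∀ n, HMnorm M (f n) < ⊤)
    (hcauchy : ∀ ε : ℝ, 0 < ε → ∃ N : ℕ, ∀ n m : ℕ, N ≤ n → N ≤ m →
      HMnorm M (fun z => f n z - f m z) ≤ ENNReal.ofReal ε) :
    ∃ g : ℂ → ℂ, DifferentiableOn ℂ g {z : ℂ | |z.im| < M} ∧ HMnorm M g < ⊤ ∧
      Filter.Tendsto (fun n => HMnorm M (fun z => f n z - g z))
        Filter.atTop (nhds 0) := by
  have hπ := Real.pi_pos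
  set S := {z : ℂ | |z.im| < M} with hSdef
  have hSopen : IsOpen S := isOpen_lt (continuous_abs.comp Complex.continuous_im) continuous_const
  have him : ∀ (x y : ℝ), ((x:ℂ) + (y:ℂ) * Complex.I).im = y := fun x y => by simp
  have hmemS : ∀ (x y : ℝ), |y| < M → ((x:ℂ) + (y:ℂ) * Complex.I) ∈ S := by
    intro x y hy; simp only [hSdef, mem_setOf_eq, him]; exact hy
  -- uniform Cauchy on compacts
  have hUC : ∀ K ⊆ S, IsCompact K → UniformCauchySeqOn f Filter.atTop K := by
    intro K hKS hK
    rw [Metric.uniformCauchySeqOn_iff]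
    intro ε hε
    obtain ⟨δ, hδpos, hδ⟩ : ∃ δ > 0, ∀ z ∈ K, |z.im| + δ < M := by
      rcases K.eq_empty_or_nonempty with rfl | hne
      · exact ⟨M/2, by linarith, fun z hz => absurd hz (notMem_empty z)⟩
      · obtain ⟨zstar, hzK, hmax⟩ := hK.exists_isMaxOn hne
          ((continuous_abs.comp Complex.continuous_im).continuousOn)
        have hzS : |(zstar).im| < M := hKS hzK
        refine ⟨(M - |(zstar).im|)/2, by linarith, fun z hz => ?_⟩
        have h5 : |z.im| ≤ |zstar.im| := hmax hz
        linarith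
    set ε' : ℝ := ε * Real.sqrt (π * δ) / 4 with hε'def
    have hε'pos : 0 < ε' := by positivity
    obtain ⟨N, hN⟩ := hcauchy ε' hε'pos
    refine ⟨N, fun m hm n hn z hz => ?_⟩
    have hd : DifferentiableOn ℂ (fun w => f m w - f n w) S := (hanal m).sub (hanal n)
    have hb := pointwise_bound hδpos hd (hδ z hz) hε'pos.le (hN m n hm hn)
    have heq : 4 * ε'^2 / (π*δ) = ε^2/4 := by
      rw [hε'def, show (ε * Real.sqrt (π*δ) / 4)^2
        = ε^2 * (Real.sqrt (π*δ))^2 / 16 by ring, Real.sq_sqrt (by positivity)]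
      field_simp
      ring
    rw [heq] at hb
    rw [dist_eq_norm]
    nlinarith [norm_nonneg (f m z - f n z)]
  -- pointwise limit
  set g : ℂ → ℂ := fun z => Filter.limUnder Filter.atTop (fun n => f n z) with hgdef
  have hptwise : ∀ z ∈ S, Filter.Tendsto (fun n => f n z) Filter.atTop (nhds (g z)) := by
    intro z hz
    have hsing := hUC {z} (singleton_subset_iff.2 hz) isCompact_singleton
    have hcs : CauchySeq (fun n => f n z) := by
      rw [Metric.cauchySeq_iff]
      intro e he
      obtain ⟨N, hN⟩ := Metric.uniformCauchySeqOn_iff.mp hsing e he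
      exact ⟨N, fun m hm n hn => hN m hm n hn z rfl⟩
    obtain ⟨a, ha⟩ := cauchySeq_tendsto_of_complete hcs
    have hga : g z = a := ha.limUnder_eq
    rwa [hga]
  -- locally uniform convergence
  have hTLU : TendstoLocallyUniformlyOn f g Filter.atTop S := by
    rw [tendstoLocallyUniformlyOn_iff_forall_isCompact hSopen]
    intro K hKS hK
    exact (hUC K hKS hK).tendstoUniformlyOn_of_tendsto (fun z hz => hptwise z (hKS hz))
  have hgdiff : DifferentiableOn ℂ g S :=
    hTLU.differentiableOn (Filter.Eventually.of_forall hanal) hSopen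
  have hgcont : ContinuousOn g S := hgdiff.continuousOn
  -- convergence in HM norm
  have hconv : ∀ ε : ℝ, 0 < ε → ∃ N : ℕ, ∀ n, N ≤ n →
      HMnorm M (fun z => f n z - g z) ≤ ENNReal.ofReal ε := by
    intro ε hε
    obtain ⟨N, hN⟩ := hcauchy ε hε
    refine ⟨N, fun n hn => ?_⟩
    refine HMnorm_le fun y hy => ?_
    have hcont : ∀ m : ℕ, Continuous fun x : ℝ =>
        ENNReal.ofReal ((1 + |x|^2) * ‖(f n (x + y * Complex.I)
          - f m (x + y * Complex.I))‖ ^ 2) := by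
      intro m
      refine ENNReal.continuous_ofReal.comp ?_
      refine Continuous.mul (by continuity) ?_
      refine Continuous.pow ?_ 2
      refine continuous_norm.comp ?_
      have hxy : Continuous fun x : ℝ => (x:ℂ) + (y:ℂ) * Complex.I := by continuity
      have h1 : Continuous fun x : ℝ => f n ((x:ℂ) + (y:ℂ) * Complex.I) :=
        (hanal n).continuousOn.comp_continuous hxy (fun x => hmemS x y hy)
      have h2 : Continuous fun x : ℝ => f m ((x:ℂ) + (y:ℂ) * Complex.I) :=
        (hanal m).continuousOn.comp_continuous hxy (fun x => hmemS x y hy)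
      exact h1.sub h2
    have hptl : ∀ x : ℝ, Filter.Tendsto (fun m : ℕ =>
        ENNReal.ofReal ((1 + |x|^2) * ‖(f n (x + y * Complex.I)
          - f m (x + y * Complex.I))‖ ^ 2)) Filter.atTop
        (nhds (ENNReal.ofReal ((1 + |x|^2) * ‖(f n (x + y * Complex.I)
          - g (x + y * Complex.I))‖ ^ 2))) := by
      intro x
      have h1 := hptwise _ (hmemS x y hy)
      refine (ENNReal.continuous_ofReal.tendsto _).comp ?_
      refine Filter.Tendsto.const_mul _ ?_
      refine Filter.Tendsto.pow ?_ 2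
      exact (continuous_norm.tendsto _).comp (tendsto_const_nhds.sub h1)
    calc Lline M (fun z => f n z - g z) y
        = ∫⁻ x : ℝ, Filter.liminf (fun m : ℕ =>
            ENNReal.ofReal ((1 + |x|^2) * ‖(f n (x + y * Complex.I)
              - f m (x + y * Complex.I))‖ ^ 2)) Filter.atTop := by
          refine lintegral_congr fun x => ?_
          rw [(hptl x).liminf_eq]
      _ ≤ Filter.liminf (fun m : ℕ => ∫⁻ x : ℝ,
            ENNReal.ofReal ((1 + |x|^2) * ‖(f n (x + y * Complex.I)
              - f m (x + y * Complex.I))‖ ^ 2)) Filter.atTop :=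
          lintegral_liminf_le fun m => (hcont m).measurable
      _ ≤ (ENNReal.ofReal ε) ^ (2:ℝ) := by
          have hev : ∀ᶠ m in Filter.atTop, (∫⁻ x : ℝ,
              ENNReal.ofReal ((1 + |x|^2) * ‖(f n (x + y * Complex.I)
                - f m (x + y * Complex.I))‖ ^ 2)) ≤ (ENNReal.ofReal ε) ^ (2:ℝ) :=
            Filter.eventually_atTop.2 ⟨N, fun m hm =>
              (Lline_le M (fun z => f n z - f m z) hy).trans
                (ENNReal.rpow_le_rpow (hN n m hn hm) (by norm_num))⟩
          refine le_trans (Filter.liminf_le_liminf hev) ?_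
          rw [Filter.liminf_const]
  refine ⟨g, hgdiff, ?_, ?_⟩
  · -- finiteness
    obtain ⟨N, hN⟩ := hconv 1 one_pos
    have hdiff : HMnorm M (fun z => f N z - g z) ≤ ENNReal.ofReal 1 := hN N le_rfl
    -- triangle inequality
    have htri : HMnorm M g ≤ HMnorm M (f N) + HMnorm M (fun z => f N z - g z) := by
      rw [HMnorm_eq M g]
      refine iSup₂_le fun y hy => ?_
      set Φ : (ℂ → ℂ) → ℝ → ENNReal := fun q x =>
        ENNReal.ofReal (Real.sqrt (1 + |x|^2) * ‖q ((x:ℂ) + (y:ℂ) * Complex.I)‖)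
        with hΦdef
      have hL : ∀ q : ℂ → ℂ, Lline M q y = ∫⁻ x : ℝ, (Φ q x) ^ (2:ℝ) := by
        intro q
        refine lintegral_congr fun x => ?_
        rw [hΦdef]
        rw [show (2:ℝ) = ((2:ℕ):ℝ) by norm_num, ENNReal.rpow_natCast,
          ← ENNReal.ofReal_pow (by positivity)]
        congr 1
        rw [mul_pow, Real.sq_sqrt (by positivity)]
      have hmeasN : AEMeasurable (Φ (f N)) volume := by
        refine Continuous.aemeasurable ?_
        refine ENNReal.continuous_ofReal.comp ?_
        refine Continuous.mul (by continuity) ?_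
        refine continuous_norm.comp ?_
        exact (hanal N).continuousOn.comp_continuous (by continuity) (fun x => hmemS x y hy)
      have hmeasD : AEMeasurable (Φ (fun z => f N z - g z)) volume := by
        refine Continuous.aemeasurable ?_
        refine ENNReal.continuous_ofReal.comp ?_
        refine Continuous.mul (by continuity) ?_
        refine continuous_norm.comp ?_
        have hxy : Continuous fun x : ℝ => (x:ℂ) + (y:ℂ) * Complex.I := by continuity
        exact ((hanal N).continuousOn.comp_continuous hxy (fun x => hmemS x y hy)).sub
          (hgcont.comp_continuous hxy (fun x => hmemS x y hy))
      have hpt : ∀ x : ℝ, Φ g x ≤ Φ (f N) x + Φ (fun z => f N z - g z) x := by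
        intro x
        rw [hΦdef]
        simp only
        rw [← ENNReal.ofReal_add (by positivity) (by positivity)]
        refine ENNReal.ofReal_le_ofReal ?_
        rw [← mul_add]
        refine mul_le_mul_of_nonneg_left ?_ (Real.sqrt_nonneg _)
        set z := (x:ℂ) + (y:ℂ) * Complex.I
        calc ‖g z‖ = ‖f N z - (f N z - g z)‖ := by ring_nf
          _ ≤ ‖f N z‖ + ‖f N z - g z‖ := by
              exact (norm_sub_le _ _)
      calc (Lline M g y) ^ ((1:ℝ)/2)
          ≤ (∫⁻ x : ℝ, (Φ (f N) x + Φ (fun z => f N z - g z) x) ^ (2:ℝ)) ^ ((1:ℝ)/2) := by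
            rw [hL]
            refine ENNReal.rpow_le_rpow ?_ (by norm_num)
            exact lintegral_mono fun x => ENNReal.rpow_le_rpow (hpt x) (by norm_num)
        _ ≤ (∫⁻ x : ℝ, (Φ (f N) x) ^ (2:ℝ)) ^ ((1:ℝ)/2)
            + (∫⁻ x : ℝ, (Φ (fun z => f N z - g z) x) ^ (2:ℝ)) ^ ((1:ℝ)/2) :=
            ENNReal.lintegral_Lp_add_le hmeasN hmeasD (by norm_num)
        _ = (Lline M (f N) y) ^ ((1:ℝ)/2) + (Lline M (fun z => f N z - g z) y) ^ ((1:ℝ)/2) := by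
            rw [hL, hL]
        _ ≤ HMnorm M (f N) + HMnorm M (fun z => f N z - g z) := by
            refine add_le_add ?_ ?_
            · rw [HMnorm_eq]
              exact le_iSup₂ (f := fun (y : ℝ) (_ : |y| < M) => (Lline M (f N) y) ^ ((1:ℝ)/2)) y hy
            · rw [HMnorm_eq]
              exact le_iSup₂ (f := fun (y : ℝ) (_ : |y| < M) =>
                (Lline M (fun z => f N z - g z) y) ^ ((1:ℝ)/2)) y hy
    refine lt_of_le_of_lt htri ?_
    exact ENNReal.add_lt_top.2 ⟨hfin N, lt_of_le_of_lt hdiff (by simp)⟩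
  · -- tendsto 0
    rw [ENNReal.tendsto_atTop_zero]
    intro ε hε
    rcases eq_or_ne ε ⊤ with rfl | hne
    · obtain ⟨N, hN⟩ := hconv 1 one_pos
      exact ⟨N, fun n hn => le_top⟩
    · have hpos : 0 < ε.toReal := ENNReal.toReal_pos (ne_of_gt hε) hne
      obtain ⟨N, hN⟩ := hconv _ hpos
      exact ⟨N, fun n hn => (hN n hn).trans (by rw [ENNReal.ofReal_toReal hne])⟩
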